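/- For every k ≥ 1 and every g > 4k: Σ_{i=1}^{g} p_k^S(i−1, g−i) = Σ_{i=1}^{4k} p_k^S(i−1, 4k−i). -/

import Mathlib

open MeasureTheory ENNReal
open scoped Classical

/-- A configuration: a coloring of `ℤ` with the two colors coded by `Bool`. -/
abbrev Config := ℤ → Bool

/-- A site `x` is unstable in `η` iff it lies in a monochromatic chain of length (at least) 3,
i.e. there is `y ∈ {x-2, x-1, x}` with `η y = η (y+1) = η (y+2)`. Spelled out explicitly. -/
def Unstable (η : Config) (x : ℤ) : Prop :=
  (η (x - 2) = η (x - 1) ∧ η (x - 1) = η x) ∨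
  (η (x - 1) = η x ∧ η x = η (x + 1)) ∨
  (η x = η (x + 1) ∧ η (x + 1) = η (x + 2))

instance (η : Config) (x : ℤ) : Decidable (Unstable η x) := by
  unfold Unstable; infer_instance

/-- One step of the dynamics: stable sites keep their color, unstable ones are recolored
using the fresh colors `c`. -/
def update (η : Config) (c : ℤ → Bool) : Config :=
  fun x => if Unstable η x then c x else η x

/-- `evolve ω η k = R^k(η)`: the configuration after `k` steps, where the simultaneous
recoloring at step `j` uses the fresh colors `ω j`. -/
def evolve (ω : ℕ → ℤ → Bool) (η : Config) : ℕ → Config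
  | 0 => η
  | k + 1 => update (evolve ω η k) (ω k)

/-- `μ` makes the coordinates of the coin field i.i.d. uniform on the two colors:
every finite cylinder event has probability `(1/2)^(number of coordinates)`. -/
def IIDCoins (μ : Measure (ℕ → ℤ → Bool)) : Prop :=
  ∀ (S : Finset (ℕ × ℤ)) (f : ℕ × ℤ → Bool),
    μ {ω | ∀ p ∈ S, ω p.1 p.2 = f p} = (1 / 2 : ℝ≥0∞) ^ S.card

/-- The number of unstable sites of a configuration. -/
noncomputable def numUnstable (η : Config) : ℕ∞ := {x : ℤ | Unstable η x}.encard

/-- `p_k^I`: sup over configurations `η` with site `0` unstable of `P(σ_{R^k(η)}(0) = 0)`. -/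
noncomputable def pI (μ : Measure (ℕ → ℤ → Bool)) (k : ℕ) : ℝ≥0∞ :=
  ⨆ (η : Config) (_ : Unstable η 0), μ {ω | Unstable (evolve ω η k) 0}

/-- `p_k^{III}`: sup over configurations `η` with sites `-1, 0, 1` all unstable of
`P(σ_{R^k(η)}(0) = 0)`. -/
noncomputable def pIII (μ : Measure (ℕ → ℤ → Bool)) (k : ℕ) : ℝ≥0∞ :=
  ⨆ (η : Config) (_ : Unstable η (-1) ∧ Unstable η 0 ∧ Unstable η 1),
    μ {ω | Unstable (evolve ω η k) 0}

/-- The conditioning event of `p_k^S(n,m)` (at site `0`): all sites `i` with `-n ≤ i ≤ m`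
are stable, and the boundary sites `-n-1` (if `n` is finite) and `m+1` (if `m` is finite)
are unstable.  The inequality `-n ≤ i ≤ m` in `ℕ∞` is coded using `Int.toNat`. -/
def SWindow (η : Config) (n m : ℕ∞) : Prop :=
  (∀ i : ℤ, (((-i).toNat : ℕ∞) ≤ n) → ((i.toNat : ℕ∞) ≤ m) → ¬ Unstable η i) ∧
  (∀ nn : ℕ, n = (nn : ℕ∞) → Unstable η (-(nn : ℤ) - 1)) ∧
  (∀ mm : ℕ, m = (mm : ℕ∞) → Unstable η ((mm : ℤ) + 1))

/-- `p_k^S(n,m)` for `n, m ∈ ℕ ∪ {∞}`: sup over configurations `η` satisfying the stable-window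
condition of `P(σ_{R^k(η)}(0) = 0)`. -/
noncomputable def pS (μ : Measure (ℕ → ℤ → Bool)) (k : ℕ) (n m : ℕ∞) : ℝ≥0∞ :=
  ⨆ (η : Config) (_ : SWindow η n m), μ {ω | Unstable (evolve ω η k) 0}

lemma unstable_congr {η η' : Config} {x : ℤ}
    (h : ∀ y, x - 2 ≤ y → y ≤ x + 2 → η y = η' y) :
    Unstable η x ↔ Unstable η' x := by
  unfold Unstable
  rw [h (x-2) (by omega) (by omega), h (x-1) (by omega) (by omega),
      h x (by omega) (by omega), h (x+1) (by omega) (by omega),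
      h (x+2) (by omega) (by omega)]

lemma evolve_cut_right (ω : ℕ → ℤ → Bool) (η η' : Config) (M : ℤ)
    (h : ∀ y ≤ M, η y = η' y)
    (hs1 : ¬ Unstable η (M-1)) (hs2 : ¬ Unstable η M)
    (hs1' : ¬ Unstable η' (M-1)) (hs2' : ¬ Unstable η' M) :
    ∀ j : ℕ, ∀ y ≤ M - 2*j, evolve ω η (j+1) y = evolve ω η' (j+1) y := by
  intro j
  induction j with
  | zero =>
    intro y hy
    show update η (ω 0) y = update η' (ω 0) y
    unfold update
    rcases (by omega : y ≤ M - 2 ∨ y = M - 1 ∨ y = M) with h3 | h3 | h3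
    · have hiff : Unstable η y ↔ Unstable η' y :=
        unstable_congr (fun z h1 h2 => h z (by omega))
      by_cases hu : Unstable η y
      · rw [if_pos hu, if_pos (hiff.mp hu)]
      · rw [if_neg hu, if_neg (fun hu' => hu (hiff.mpr hu'))]; exact h y (by omega)
    · rw [if_neg (show ¬ Unstable η y by rw [h3]; exact hs1),
          if_neg (show ¬ Unstable η' y by rw [h3]; exact hs1')]
      exact h y (by omega)
    · rw [if_neg (show ¬ Unstable η y by rw [h3]; exact hs2),
          if_neg (show ¬ Unstable η' y by rw [h3]; exact hs2')]
      exact h y (by omega)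
  | succ j ih =>
    intro y hy
    show update (evolve ω η (j+1)) (ω (j+1)) y = update (evolve ω η' (j+1)) (ω (j+1)) y
    unfold update
    have hiff : Unstable (evolve ω η (j+1)) y ↔ Unstable (evolve ω η' (j+1)) y :=
      unstable_congr (fun z h1 h2 => ih z (by push_cast at hy ⊢; omega))
    by_cases hu : Unstable (evolve ω η (j+1)) y
    · rw [if_pos hu, if_pos (hiff.mp hu)]
    · rw [if_neg hu, if_neg (fun hu' => hu (hiff.mpr hu'))]
      exact ih y (by push_cast at hy ⊢; omega)

lemma unstable_evolve_cut_right (ω : ℕ → ℤ → Bool) (η η' : Config) (k : ℕ) (hk : 1 ≤ k)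
    (h : ∀ y ≤ (2*k:ℤ), η y = η' y)
    (hs1 : ¬ Unstable η (2*k-1)) (hs2 : ¬ Unstable η (2*k))
    (hs1' : ¬ Unstable η' (2*k-1)) (hs2' : ¬ Unstable η' (2*k)) :
    (Unstable (evolve ω η k) 0 ↔ Unstable (evolve ω η' k) 0) := by
  obtain ⟨j, rfl⟩ : ∃ j, k = j + 1 := ⟨k-1, by omega⟩
  exact unstable_congr (fun z h1 h2 =>
    evolve_cut_right ω η η' (2*((j:ℕ)+1:ℕ):ℤ) h hs1 hs2 hs1' hs2' j z (by push_cast; omega))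

lemma evolve_cut_left (ω : ℕ → ℤ → Bool) (η η' : Config) (M : ℤ)
    (h : ∀ y, M ≤ y → η y = η' y)
    (hs1 : ¬ Unstable η (M+1)) (hs2 : ¬ Unstable η M)
    (hs1' : ¬ Unstable η' (M+1)) (hs2' : ¬ Unstable η' M) :
    ∀ j : ℕ, ∀ y, M + 2*j ≤ y → evolve ω η (j+1) y = evolve ω η' (j+1) y := by
  intro j
  induction j with
  | zero =>
    intro y hy
    show update η (ω 0) y = update η' (ω 0) y
    unfold update
    rcases (by omega : M + 2 ≤ y ∨ y = M + 1 ∨ y = M) with h3 | h3 | h3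
    · have hiff : Unstable η y ↔ Unstable η' y :=
        unstable_congr (fun z h1 h2 => h z (by omega))
      by_cases hu : Unstable η y
      · rw [if_pos hu, if_pos (hiff.mp hu)]
      · rw [if_neg hu, if_neg (fun hu' => hu (hiff.mpr hu'))]; exact h y (by omega)
    · rw [if_neg (show ¬ Unstable η y by rw [h3]; exact hs1),
          if_neg (show ¬ Unstable η' y by rw [h3]; exact hs1')]
      exact h y (by omega)
    · rw [if_neg (show ¬ Unstable η y by rw [h3]; exact hs2),
          if_neg (show ¬ Unstable η' y by rw [h3]; exact hs2')]
      exact h y (by omega)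
  | succ j ih =>
    intro y hy
    show update (evolve ω η (j+1)) (ω (j+1)) y = update (evolve ω η' (j+1)) (ω (j+1)) y
    unfold update
    have hiff : Unstable (evolve ω η (j+1)) y ↔ Unstable (evolve ω η' (j+1)) y :=
      unstable_congr (fun z h1 h2 => ih z (by push_cast at hy ⊢; omega))
    by_cases hu : Unstable (evolve ω η (j+1)) y
    · rw [if_pos hu, if_pos (hiff.mp hu)]
    · rw [if_neg hu, if_neg (fun hu' => hu (hiff.mpr hu'))]
      exact ih y (by push_cast at hy ⊢; omega)

lemma unstable_evolve_cut_left (ω : ℕ → ℤ → Bool) (η η' : Config) (k : ℕ) (hk : 1 ≤ k)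
    (h : ∀ y, -(2*k:ℤ) ≤ y → η y = η' y)
    (hs1 : ¬ Unstable η (-(2*k:ℤ)+1)) (hs2 : ¬ Unstable η (-(2*k:ℤ)))
    (hs1' : ¬ Unstable η' (-(2*k:ℤ)+1)) (hs2' : ¬ Unstable η' (-(2*k:ℤ))) :
    (Unstable (evolve ω η k) 0 ↔ Unstable (evolve ω η' k) 0) := by
  obtain ⟨j, rfl⟩ : ∃ j, k = j + 1 := ⟨k-1, by omega⟩
  exact unstable_congr (fun z h1 h2 =>
    evolve_cut_left ω η η' (-(2*((j:ℕ)+1:ℕ):ℤ)) h hs1 hs2 hs1' hs2' j z (by push_cast; omega))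

lemma evolve_stable (ω : ℕ → ℤ → Bool) (η : Config) (N : ℤ)
    (h : ∀ x : ℤ, -N ≤ x → x ≤ N → ¬ Unstable η x) :
    ∀ j : ℕ, ∀ x : ℤ, -(N - 2*j) ≤ x → x ≤ N - 2*j →
      evolve ω η j x = η x ∧ ¬ Unstable (evolve ω η j) x := by
  intro j
  induction j with
  | zero => intro x h1 h2; exact ⟨rfl, h x (by push_cast at *; omega) (by push_cast at *; omega)⟩
  | succ j ih =>
    have hval : ∀ x : ℤ, -(N - 2*j) ≤ x → x ≤ N - 2*j → evolve ω η (j+1) x = η x := by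
      intro x h1 h2
      show update (evolve ω η j) (ω j) x = η x
      rw [update, if_neg (ih x h1 h2).2]
      exact (ih x h1 h2).1
    intro x h1 h2
    push_cast at h1 h2
    refine ⟨hval x (by omega) (by omega), ?_⟩
    rw [unstable_congr (η' := η) (fun z hz1 hz2 => hval z (by omega) (by omega))]
    exact h x (by omega) (by omega)

lemma swindow_stable_nonneg {η : Config} {n : ℕ∞} {m : ℕ} (hw : SWindow η n (m:ℕ∞))
    {i : ℤ} (h0 : 0 ≤ i) (h1 : i ≤ m) : ¬ Unstable η i := by
  apply hw.1
  · have : (-i).toNat = 0 := by omega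
    simp [this]
  · exact_mod_cast Nat.cast_le.mpr (show i.toNat ≤ m by omega)

lemma swindow_stable_nonpos {η : Config} {n : ℕ} {m : ℕ∞} (hw : SWindow η (n:ℕ∞) m)
    {i : ℤ} (h0 : -(n:ℤ) ≤ i) (h1 : i ≤ 0) : ¬ Unstable η i := by
  apply hw.1
  · exact_mod_cast Nat.cast_le.mpr (show (-i).toNat ≤ n by omega)
  · have : i.toNat = 0 := by omega
    simp [this]

lemma pS_zero (μ : MeasureTheory.Measure (ℕ → ℤ → Bool)) (k : ℕ) (n m : ℕ∞)
    (hn : ((2*k : ℕ) : ℕ∞) ≤ n) (hm : ((2*k : ℕ) : ℕ∞) ≤ m) :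
    pS μ k n m = 0 := by
  rw [pS]
  simp only [ENNReal.iSup_eq_zero]
  intro η hw
  have hset : {ω : ℕ → ℤ → Bool | Unstable (evolve ω η k) 0} = ∅ := by
    ext ω
    simp only [Set.mem_setOf_eq, Set.mem_empty_iff_false, iff_false]
    have hstab : ∀ x : ℤ, -(2*(k:ℤ)) ≤ x → x ≤ 2*(k:ℤ) → ¬ Unstable η x := by
      intro x hx1 hx2
      apply hw.1
      · exact le_trans (Nat.cast_le.mpr (show (-x).toNat ≤ 2*k by omega)) hn
      · exact le_trans (Nat.cast_le.mpr (show x.toNat ≤ 2*k by omega)) hm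
    exact (evolve_stable ω η (2*(k:ℤ)) hstab k 0 (by push_cast; omega) (by push_cast; omega)).2
  rw [hset]
  exact MeasureTheory.measure_empty

lemma pS_le_right (μ : MeasureTheory.Measure (ℕ → ℤ → Bool)) (k : ℕ) (hk : 1 ≤ k) (n : ℕ∞)
    (m m' : ℕ) (hm : 2*k ≤ m) (hm' : 2*k ≤ m') :
    pS μ k n (m : ℕ∞) ≤ pS μ k n (m' : ℕ∞) := by
  rw [pS, pS]
  apply iSup_le; intro η; apply iSup_le; intro hw
  set c := η (2*k) with hc
  set A : ℤ → Bool := fun x => xor c (decide ((x - 2*k) % 2 = 1)) with hA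
  set η' : Config := fun x => if x ≤ 2*k then η x else if x ≤ (m':ℤ) then A x else !(A m') with hη'
  have hA2k : A (2*k) = c := by simp [hA]
  have hAsucc : ∀ x : ℤ, A (x+1) = ! A x := by
    intro x
    by_cases h : (x - 2*k) % 2 = 1
    · have h2 : ¬ ((x + 1 - 2*k) % 2 = 1) := by omega
      simp only [hA, h, h2]; simp
    · have h2 : (x + 1 - 2*k) % 2 = 1 := by omega
      simp only [hA, h, h2]; simp
  have hagree : ∀ y : ℤ, y ≤ 2*k → η y = η' y := by
    intro y hy; simp [hη', if_pos hy]
  have hmid : ∀ x : ℤ, 2*k ≤ x → x ≤ (m':ℤ) → η' x = A x := by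
    intro x h1 h2
    rcases eq_or_lt_of_le h1 with h | h
    · simp [hη', ← h, hA2k, ← hc]
    · simp only [hη', if_neg (by omega : ¬ x ≤ 2*(k:ℤ)), if_pos h2]
  have hhigh : ∀ x : ℤ, (m':ℤ) < x → η' x = !(A m') := by
    intro x h1
    simp only [hη', if_neg (by omega : ¬ x ≤ 2*(k:ℤ)), if_neg (by omega : ¬ x ≤ (m':ℤ))]
  -- no monochromatic triple at y for 2k-3 ≤ y ≤ m'
  have hkey : ∀ y : ℤ, 2*k - 3 ≤ y → y ≤ (m':ℤ) →
      ¬ (η' y = η' (y+1) ∧ η' (y+1) = η' (y+2)) := by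
    rintro y h1 h2 ⟨e1, e2⟩
    rcases (by omega : y ≤ 2*(k:ℤ) - 2 ∨ y = 2*(k:ℤ) - 1 ∨ 2*(k:ℤ) ≤ y) with h3 | h3 | h3
    · -- all three sites ≤ 2k : this makes η unstable at y+2 ∈ {2k-1, 2k}
      rw [← hagree y (by omega), ← hagree (y+1) (by omega)] at e1
      rw [← hagree (y+1) (by omega), ← hagree (y+2) (by omega)] at e2
      refine swindow_stable_nonneg hw (i := y+2) (by omega) (by omega) ?_
      exact Or.inl ⟨by rw [show y+2-2 = y by ring, show y+2-1 = y+1 by ring]; exact e1,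
        by rw [show y+2-1 = y+1 by ring]; exact e2⟩
    · -- e2 relates positions 2k and 2k+1
      rw [show y + 1 = 2*(k:ℤ) by omega, show y + 2 = 2*(k:ℤ)+1 by omega] at e2
      rw [← hagree (2*k) le_rfl] at e2
      rcases (by omega : 2*(k:ℤ)+1 ≤ (m':ℤ) ∨ (m':ℤ) = 2*k) with h4 | h4
      · rw [hmid (2*(k:ℤ)+1) (by omega) h4, hAsucc, hA2k] at e2
        rw [← hc] at e2; simp at e2
      · rw [hhigh (2*(k:ℤ)+1) (by omega), h4, hA2k] at e2
        rw [← hc] at e2; simp at e2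
    · -- y ≥ 2k: e1 relates y and y+1 within the alternating/boundary zone
      rw [hmid y h3 h2] at e1
      rcases (by omega : y + 1 ≤ (m':ℤ) ∨ y = (m':ℤ)) with h4 | h4
      · rw [hmid (y+1) (by omega) h4, hAsucc] at e1
        simp at e1
      · rw [hhigh (y+1) (by omega), h4] at e1
        simp at e1
  have hw' : SWindow η' n (m' : ℕ∞) := by
    refine ⟨?_, ?_, ?_⟩
    · intro i hi1 hi2
      have him' : i ≤ (m':ℤ) := by
        have := Nat.cast_le.mp hi2; omega
      rcases (by omega : i ≤ 2*(k:ℤ) - 2 ∨ 2*(k:ℤ) - 1 ≤ i) with h3 | h3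
      · rw [← unstable_congr (fun z hz1 hz2 => hagree z (by omega))]
        apply hw.1 i hi1
        exact Nat.cast_le.mpr (show i.toNat ≤ m by omega)
      · rintro (⟨e1, e2⟩ | ⟨e1, e2⟩ | ⟨e1, e2⟩)
        · exact hkey (i-2) (by omega) (by omega)
            ⟨by rw [show i-2+1 = i-1 by ring]; exact e1,
             by rw [show i-2+1 = i-1 by ring, show i-2+2 = i by ring]; exact e2⟩
        · exact hkey (i-1) (by omega) (by omega)
            ⟨by rw [show i-1+1 = i by ring]; exact e1,
             by rw [show i-1+1 = i by ring, show i-1+2 = i+1 by ring]; exact e2⟩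
        · exact hkey i (by omega) (by omega) ⟨e1, e2⟩
    · intro nn hnn
      rw [← unstable_congr (fun z hz1 hz2 => hagree z (by omega))]
      exact hw.2.1 nn hnn
    · intro mm hmm
      have hmm' : mm = m' := by exact_mod_cast hmm.symm
      subst hmm'
      refine Or.inr (Or.inr ⟨?_, ?_⟩)
      · rw [hhigh ((mm:ℤ)+1) (by omega), hhigh ((mm:ℤ)+1+1) (by omega)]
      · rw [hhigh ((mm:ℤ)+1+1) (by omega), hhigh ((mm:ℤ)+1+2) (by omega)]
  have hs1 : ¬ Unstable η (2*(k:ℤ)-1) := swindow_stable_nonneg hw (by omega) (by omega)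
  have hs2 : ¬ Unstable η (2*(k:ℤ)) := swindow_stable_nonneg hw (by omega) (by omega)
  have hs1' : ¬ Unstable η' (2*(k:ℤ)-1) := swindow_stable_nonneg hw' (by omega) (by omega)
  have hs2' : ¬ Unstable η' (2*(k:ℤ)) := swindow_stable_nonneg hw' (by omega) (by omega)
  have hset : {ω : ℕ → ℤ → Bool | Unstable (evolve ω η k) 0}
      = {ω : ℕ → ℤ → Bool | Unstable (evolve ω η' k) 0} := by
    ext ω
    simp only [Set.mem_setOf_eq]
    exact unstable_evolve_cut_right ω η η' k hk (fun y hy => hagree y hy) hs1 hs2 hs1' hs2'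
  rw [hset]
  exact le_iSup₂_of_le η' hw' le_rfl

lemma pS_le_left (μ : MeasureTheory.Measure (ℕ → ℤ → Bool)) (k : ℕ) (hk : 1 ≤ k)
    (n n' : ℕ) (m : ℕ∞) (hn : 2*k ≤ n) (hn' : 2*k ≤ n') :
    pS μ k (n : ℕ∞) m ≤ pS μ k (n' : ℕ∞) m := by
  rw [pS, pS]
  apply iSup_le; intro η; apply iSup_le; intro hw
  set c := η (-(2*(k:ℤ))) with hc
  set A : ℤ → Bool := fun x => xor c (decide ((-(2*(k:ℤ)) - x) % 2 = 1)) with hA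
  set η' : Config := fun x =>
    if -(2*(k:ℤ)) ≤ x then η x else if -(n':ℤ) ≤ x then A x else !(A (-(n':ℤ))) with hη'
  have hA2k : A (-(2*(k:ℤ))) = c := by simp [hA]
  have hApred : ∀ x : ℤ, A (x-1) = ! A x := by
    intro x
    by_cases h : (-(2*(k:ℤ)) - x) % 2 = 1
    · have h2 : ¬ ((-(2*(k:ℤ)) - (x - 1)) % 2 = 1) := by omega
      simp [hA, h, h2]
    · have h2 : (-(2*(k:ℤ)) - (x - 1)) % 2 = 1 := by omega
      simp [hA, h, h2]
  have hagree : ∀ y : ℤ, -(2*(k:ℤ)) ≤ y → η y = η' y := by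
    intro y hy; simp [hη', if_pos hy]
  have hmid : ∀ x : ℤ, -(n':ℤ) ≤ x → x ≤ -(2*(k:ℤ)) → η' x = A x := by
    intro x h1 h2
    rcases eq_or_lt_of_le h2 with h | h
    · simp [hη', h, hA2k, ← hc]
    · simp only [hη', if_neg (by omega : ¬ -(2*(k:ℤ)) ≤ x), if_pos h1]
  have hlow : ∀ x : ℤ, x < -(n':ℤ) → η' x = !(A (-(n':ℤ))) := by
    intro x h1
    simp only [hη', if_neg (by omega : ¬ -(2*(k:ℤ)) ≤ x), if_neg (by omega : ¬ -(n':ℤ) ≤ x)]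
  have hkey : ∀ y : ℤ, -(n':ℤ) - 2 ≤ y → y ≤ -(2*(k:ℤ)) + 1 →
      ¬ (η' y = η' (y+1) ∧ η' (y+1) = η' (y+2)) := by
    rintro y h1 h2 ⟨e1, e2⟩
    rcases (by omega : -(2*(k:ℤ)) ≤ y ∨ y = -(2*(k:ℤ)) - 1 ∨ y ≤ -(2*(k:ℤ)) - 2)
      with h3 | h3 | h3
    · rw [← hagree y (by omega), ← hagree (y+1) (by omega)] at e1
      rw [← hagree (y+1) (by omega), ← hagree (y+2) (by omega)] at e2
      exact swindow_stable_nonpos hw (i := y) (by omega) (by omega)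
        (Or.inr (Or.inr ⟨e1, e2⟩))
    · rw [show y = -(2*(k:ℤ)) - 1 from h3] at e1
      rw [show -(2*(k:ℤ)) - 1 + 1 = -(2*(k:ℤ)) by ring] at e1
      rw [← hagree (-(2*(k:ℤ))) le_rfl, ← hc] at e1
      rcases (by omega : -(n':ℤ) ≤ -(2*(k:ℤ)) - 1 ∨ (n':ℤ) = 2*k) with h4 | h4
      · rw [hmid (-(2*(k:ℤ)) - 1) h4 (by omega), hApred, hA2k] at e1
        simp at e1
      · rw [hlow (-(2*(k:ℤ)) - 1) (by omega), show -(n':ℤ) = -(2*(k:ℤ)) by omega, hA2k] at e1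
        simp at e1
    · rw [hmid (y+2) (by omega) (by omega)] at e2
      rcases (by omega : -(n':ℤ) ≤ y + 1 ∨ y + 1 = -(n':ℤ) - 1) with h4 | h4
      · rw [hmid (y+1) h4 (by omega), show y + 1 = (y+2) - 1 by ring, hApred] at e2
        simp at e2
      · rw [hlow (y+1) (by omega), show y + 2 = -(n':ℤ) by omega] at e2
        simp at e2
  have hw' : SWindow η' (n' : ℕ∞) m := by
    refine ⟨?_, ?_, ?_⟩
    · intro i hi1 hi2
      have hin' : -(n':ℤ) ≤ i := by
        have := Nat.cast_le.mp hi1; omega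
      rcases (by omega : -(2*(k:ℤ)) + 2 ≤ i ∨ i ≤ -(2*(k:ℤ)) + 1) with h3 | h3
      · rw [← unstable_congr (fun z hz1 hz2 => hagree z (by omega))]
        apply hw.1 i _ hi2
        exact Nat.cast_le.mpr (show (-i).toNat ≤ n by omega)
      · rintro (⟨e1, e2⟩ | ⟨e1, e2⟩ | ⟨e1, e2⟩)
        · exact hkey (i-2) (by omega) (by omega)
            ⟨by rw [show i-2+1 = i-1 by ring]; exact e1,
             by rw [show i-2+1 = i-1 by ring, show i-2+2 = i by ring]; exact e2⟩
        · exact hkey (i-1) (by omega) (by omega)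
            ⟨by rw [show i-1+1 = i by ring]; exact e1,
             by rw [show i-1+1 = i by ring, show i-1+2 = i+1 by ring]; exact e2⟩
        · exact hkey i (by omega) (by omega) ⟨e1, e2⟩
    · intro nn hnn
      have hnn' : nn = n' := by exact_mod_cast hnn.symm
      subst hnn'
      refine Or.inl ⟨?_, ?_⟩
      · rw [hlow (-(nn:ℤ)-1-2) (by omega), hlow (-(nn:ℤ)-1-1) (by omega)]
      · rw [hlow (-(nn:ℤ)-1-1) (by omega), hlow (-(nn:ℤ)-1) (by omega)]
    · intro mm hmm
      rw [← unstable_congr (fun z hz1 hz2 => hagree z (by omega))]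
      exact hw.2.2 mm hmm
  have hs1 : ¬ Unstable η (-(2*(k:ℤ))+1) := swindow_stable_nonpos hw (by omega) (by omega)
  have hs2 : ¬ Unstable η (-(2*(k:ℤ))) := swindow_stable_nonpos hw (by omega) (by omega)
  have hs1' : ¬ Unstable η' (-(2*(k:ℤ))+1) := swindow_stable_nonpos hw' (by omega) (by omega)
  have hs2' : ¬ Unstable η' (-(2*(k:ℤ))) := swindow_stable_nonpos hw' (by omega) (by omega)
  have hset : {ω : ℕ → ℤ → Bool | Unstable (evolve ω η k) 0}
      = {ω : ℕ → ℤ → Bool | Unstable (evolve ω η' k) 0} := by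
    ext ω
    simp only [Set.mem_setOf_eq]
    exact unstable_evolve_cut_left ω η η' k hk (fun y hy => hagree y hy) hs1 hs2 hs1' hs2'
  rw [hset]
  exact le_iSup₂_of_le η' hw' le_rfl

lemma pS_eq_right (μ : MeasureTheory.Measure (ℕ → ℤ → Bool)) (k : ℕ) (hk : 1 ≤ k) (n : ℕ∞)
    (m m' : ℕ) (hm : 2*k ≤ m) (hm' : 2*k ≤ m') :
    pS μ k n (m : ℕ∞) = pS μ k n (m' : ℕ∞) :=
  le_antisymm (pS_le_right μ k hk n m m' hm hm') (pS_le_right μ k hk n m' m hm' hm)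

lemma pS_eq_left (μ : MeasureTheory.Measure (ℕ → ℤ → Bool)) (k : ℕ) (hk : 1 ≤ k)
    (n n' : ℕ) (m : ℕ∞) (hn : 2*k ≤ n) (hn' : 2*k ≤ n') :
    pS μ k (n : ℕ∞) m = pS μ k (n' : ℕ∞) m :=
  le_antisymm (pS_le_left μ k hk n n' m hn hn') (pS_le_left μ k hk n' n m hn' hn)


/-- for `g > 4k`, `Σ_{i=1}^{g} p_k^S(i-1, g-i) = Σ_{i=1}^{4k} p_k^S(i-1, 4k-i)`. -/
theorem pS_sum_stabilizes (μ : Measure (ℕ → ℤ → Bool)) [IsProbabilityMeasure μ]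
    (hμ : IIDCoins μ) (k : ℕ) (hk : 1 ≤ k) (g : ℕ) (hg : 4 * k < g) :
    ∑ i ∈ Finset.Icc 1 g, pS μ k ((i - 1 : ℕ) : ℕ∞) ((g - i : ℕ) : ℕ∞) =
      ∑ i ∈ Finset.Icc 1 (4 * k), pS μ k ((i - 1 : ℕ) : ℕ∞) ((4 * k - i : ℕ) : ℕ∞) := by
  have hIcc : ∀ N : ℕ, Finset.Icc 1 N = Finset.Ioc 0 N := fun N => by
    rw [← Finset.Icc_add_one_left_eq_Ioc]; rfl
  rw [hIcc, hIcc]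
  rw [← Finset.sum_Ioc_consecutive _ (by omega : 0 ≤ 2*k) (by omega : 2*k ≤ g)]
  rw [← Finset.sum_Ioc_consecutive _ (by omega : (2*k:ℕ) ≤ g - 2*k) (by omega : g - 2*k ≤ g)]
  rw [← Finset.sum_Ioc_consecutive _ (by omega : 0 ≤ 2*k) (by omega : 2*k ≤ 4*k)]
  have hmid : ∑ i ∈ Finset.Ioc (2*k) (g - 2*k),
      pS μ k ((i - 1 : ℕ) : ℕ∞) ((g - i : ℕ) : ℕ∞) = 0 := by
    apply Finset.sum_eq_zero
    intro i hi
    simp only [Finset.mem_Ioc] at hi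
    exact pS_zero μ k _ _ (Nat.cast_le.mpr (by omega)) (Nat.cast_le.mpr (by omega))
  rw [hmid, zero_add]
  congr 1
  · -- left segments agree
    apply Finset.sum_congr rfl
    intro i hi
    simp only [Finset.mem_Ioc] at hi
    rw [pS_eq_right μ k hk _ (g - i) (4*k - i) (by omega) (by omega)]
  · -- right segments agree after reindexing
    apply Finset.sum_nbij' (i := fun a => a - (g - 4*k)) (j := fun a => a + (g - 4*k))
    · intro a ha
      simp only [Finset.mem_Ioc] at ha ⊢
      omega
    · intro a ha
      simp only [Finset.mem_Ioc] at ha ⊢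
      omega
    · intro a ha
      simp only [Finset.mem_Ioc] at ha
      omega
    · intro a ha
      simp only [Finset.mem_Ioc] at ha
      omega
    · intro a ha
      simp only [Finset.mem_Ioc] at ha
      rw [show (4*k - (a - (g - 4*k)) : ℕ) = g - a from by omega]
      exact pS_eq_left μ k hk (a - 1) (a - (g - 4*k) - 1) _ (by omega) (by omega)
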